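/- For every graph G, every linear order π of V(G), every positive integer r, and every set A ⊆ V(G): the number of distinct sets of the form N_r(v) ∩ A over v ∈ V(G) is at most (1/2)·(2r+2)^{wcol_{2r}(G)}·wcol_{2r}(G)·|A| + 1. -/

import Mathlib

variable {V : Type*}

/-- Weak s-reachability. -/
def WReach (G : SimpleGraph V) (π : LinearOrder V) (s : ℕ) (v : V) : Set V :=
  letI := π
  {u | u ≤ v ∧ ∃ p : G.Walk v u, p.IsPath ∧ p.length ≤ s ∧
      ∀ w ∈ p.support, w ≠ v → w ≠ u → u < w}

noncomputable def wcol [Fintype V] (G : SimpleGraph V) (s : ℕ) : ℕ :=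
  sInf {k | ∃ π : LinearOrder V, ∀ v, (WReach G π s v).ncard ≤ k}

section Aux

open Classical in
/-- `NRel G σ n v w` : there is a walk from `v` to `w` of length at most `n`
all of whose vertices are `σ`-at least `w`. -/
def NRel (G : SimpleGraph V) (σ : LinearOrder V) (n : ℕ) (v w : V) : Prop :=
  letI := σ
  ∃ p : G.Walk v w, p.length ≤ n ∧ ∀ x ∈ p.support, w ≤ x

open Classical in
/-- Discretized minimal `NRel`-distance, capped at `r`. -/
noncomputable def Dd (G : SimpleGraph V) (σ : LinearOrder V) (r : ℕ) (v w : V) :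
    Option (Fin (r + 1)) :=
  if h : ∃ n ≤ r, NRel G σ n v w then
    some ⟨sInf {n | NRel G σ n v w}, by
      obtain ⟨n, hn, hrel⟩ := h
      exact lt_of_le_of_lt (le_trans (Nat.sInf_le hrel) hn) (Nat.lt_succ_self r)⟩
  else none

lemma Dd_some_rel {G : SimpleGraph V} {σ : LinearOrder V} {r : ℕ} {v w : V}
    {a : Fin (r + 1)} (h : Dd G σ r v w = some a) : NRel G σ a.1 v w := by
  classical
  rw [Dd] at h
  split_ifs at h with hex
  · obtain ⟨n, _, hrel⟩ := hex
    have : (a : ℕ) = sInf {n | NRel G σ n v w} := by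
      have := Option.some_injective _ h
      exact congrArg Fin.val this.symm
    rw [this]
    exact Nat.sInf_mem ⟨n, show n ∈ {n | NRel G σ n v w} from hrel⟩

lemma rel_Dd {G : SimpleGraph V} {σ : LinearOrder V} {r n : ℕ} {v w : V}
    (hn : n ≤ r) (hrel : NRel G σ n v w) :
    ∃ a : Fin (r + 1), Dd G σ r v w = some a ∧ (a : ℕ) ≤ n := by
  classical
  have hex : ∃ m ≤ r, NRel G σ m v w := ⟨n, hn, hrel⟩
  rw [Dd, dif_pos hex]
  exact ⟨_, rfl, Nat.sInf_le hrel⟩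

lemma Dd_ne_none_iff {G : SimpleGraph V} {σ : LinearOrder V} {r : ℕ} {v w : V} :
    Dd G σ r v w ≠ none ↔ ∃ n ≤ r, NRel G σ n v w := by
  classical
  rw [Dd]
  split_ifs with hex <;> simp [hex]

/-- From an `NRel` walk we get weak reachability. -/
lemma nrel_mem_wreach {G : SimpleGraph V} {σ : LinearOrder V} {n s : ℕ} {v w : V}
    (hns : n ≤ s) (hrel : NRel G σ n v w) : w ∈ WReach G σ s v := by
  letI := σ
  obtain ⟨p, hlen, hsupp⟩ := hrel
  refine ⟨hsupp v p.start_mem_support, p.bypass, p.bypass_isPath, le_trans (le_trans p.length_bypass_le hlen) hns, ?_⟩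
  intro x hx _ hxw
  exact lt_of_le_of_ne (hsupp x (p.support_bypass_subset hx)) (Ne.symm hxw)

/-- Characterization of the `r`-neighborhood trace via `Dd`. -/
lemma trace_eq (G : SimpleGraph V) (σ : LinearOrder V) (r : ℕ) (A : Set V) (v : V) :
    {w ∈ A | ∃ p : G.Walk v w, p.length ≤ r}
      = {u ∈ A | ∃ w, ∃ a b : Fin (r + 1), Dd G σ r v w = some a ∧ Dd G σ r u w = some b ∧
          (a : ℕ) + (b : ℕ) ≤ r} := by
  letI := σ
  classical
  ext u
  simp only [Set.mem_setOf_eq]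
  constructor
  · rintro ⟨hu, p, hlen⟩
    refine ⟨hu, ?_⟩
    -- take the σ-minimal vertex on p
    obtain ⟨w, hw, hwmin⟩ := Finset.exists_min_image p.support.toFinset id
      ⟨v, by simp [p.start_mem_support]⟩
    rw [List.mem_toFinset] at hw
    have hwmin' : ∀ x ∈ p.support, w ≤ x := fun x hx => hwmin x (List.mem_toFinset.2 hx)
    have hsplit := p.take_spec hw
    have hlen2 : (p.takeUntil w hw).length + (p.dropUntil w hw).length = p.length := by
      conv_rhs => rw [← hsplit]
      rw [SimpleGraph.Walk.length_append]
    have h1 : NRel G σ (p.takeUntil w hw).length v w :=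
      ⟨p.takeUntil w hw, le_refl _, fun x hx => hwmin' x (p.support_takeUntil_subset hw hx)⟩
    have h2 : NRel G σ (p.dropUntil w hw).length u w :=
      ⟨(p.dropUntil w hw).reverse, by simp, fun x hx => by
        rw [SimpleGraph.Walk.support_reverse, List.mem_reverse] at hx
        exact hwmin' x (p.support_dropUntil_subset hw hx)⟩
    obtain ⟨a, ha, hale⟩ := rel_Dd (r := r)
      (le_trans (le_trans (Nat.le_add_right _ _) hlen2.le) hlen) h1
    obtain ⟨b, hb, hble⟩ := rel_Dd (r := r)
      (le_trans (le_trans (Nat.le_add_left _ _) hlen2.le) hlen) h2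
    exact ⟨w, a, b, ha, hb, le_trans (Nat.add_le_add hale hble) (hlen2.le.trans hlen)⟩
  · rintro ⟨hu, w, a, b, ha, hb, hab⟩
    obtain ⟨p, hp, _⟩ := Dd_some_rel ha
    obtain ⟨q, hq, _⟩ := Dd_some_rel hb
    exact ⟨hu, p.append q.reverse, by
      rw [SimpleGraph.Walk.length_append, SimpleGraph.Walk.length_reverse]
      exact le_trans (Nat.add_le_add hp hq) hab⟩

/-- ncard of a union over a finite index set. -/
lemma ncard_biUnion_le' {α : Type*} (A : Set α) (hA : A.Finite) (f : α → Set α)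
    (k : ℕ) (hf : ∀ a, (f a).ncard ≤ k) (hfin : ∀ a, (f a).Finite) :
    (⋃ a ∈ A, f a).ncard ≤ A.ncard * k := by
  classical
  refine Set.Finite.induction_on A hA (by simp) ?_
  intro a s ha hs ih
  rw [Set.biUnion_insert]
  calc (f a ∪ ⋃ x ∈ s, f x).ncard ≤ (f a).ncard + (⋃ x ∈ s, f x).ncard :=
        Set.ncard_union_le _ _
    _ ≤ k + s.ncard * k := Nat.add_le_add (hf a) ih
    _ = (insert a s).ncard * k := by
        rw [Set.ncard_insert_of_notMem ha hs, Nat.succ_mul, Nat.add_comm]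

end Aux

lemma self_mem_wreach (G : SimpleGraph V) (σ : LinearOrder V) (s : ℕ) (w : V) :
    w ∈ WReach G σ s w := by
  letI := σ
  refine ⟨le_refl w, SimpleGraph.Walk.nil, SimpleGraph.Walk.IsPath.nil, by simp, ?_⟩
  intro x hx hxw _
  simp only [SimpleGraph.Walk.support_nil, List.mem_singleton] at hx
  exact absurd hx hxw

theorem stmt18 [Fintype V] (G : SimpleGraph V) (π : LinearOrder V) (r : ℕ) (hr : 0 < r)
    (A : Set V) :
    ({S : Set V | ∃ v : V, S = {w ∈ A | ∃ p : G.Walk v w, p.length ≤ r}}.ncard : ℝ)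
      ≤ (1 / 2 : ℝ) * ((2 * r + 2 : ℝ) ^ (wcol G (2 * r))) * (wcol G (2 * r) : ℝ)
          * (A.ncard : ℝ) + 1 := by
  classical
  by_cases hV : Nonempty V
  swap
  · have : {S : Set V | ∃ v : V, S = {w ∈ A | ∃ p : G.Walk v w, p.length ≤ r}} = ∅ := by
      ext S; simp only [Set.mem_setOf_eq, Set.mem_empty_iff_false, iff_false]
      rintro ⟨v, -⟩; exact hV ⟨v⟩
    rw [this]
    simp only [Set.ncard_empty, Nat.cast_zero]
    positivity
  -- pick an optimal order σ
  have hne : {k' | ∃ π' : LinearOrder V, ∀ v, (WReach G π' (2 * r) v).ncard ≤ k'}.Nonempty :=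
    ⟨Nat.card V, π, fun v => by
      rw [← Set.ncard_univ]
      exact Set.ncard_le_ncard (Set.subset_univ _) Set.finite_univ⟩
  obtain ⟨σ, hσ⟩ : ∃ σ : LinearOrder V, ∀ v, (WReach G σ (2 * r) v).ncard ≤ wcol G (2 * r) :=
    Nat.sInf_mem hne
  set k := wcol G (2 * r) with hkdef
  -- k ≥ 1
  obtain ⟨v₀⟩ := hV
  have hk1 : 1 ≤ k := by
    have h1 : 1 ≤ (WReach G σ (2 * r) v₀).ncard := by
      rw [Nat.one_le_iff_ne_zero, Ne, Set.ncard_eq_zero (Set.toFinite _)]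
      exact fun h => (h ▸ self_mem_wreach G σ (2 * r) v₀ : v₀ ∈ (∅ : Set V))
    exact le_trans h1 (hσ v₀)
  obtain ⟨k', hkk⟩ : ∃ k', k = k' + 1 := ⟨k - 1, (Nat.succ_pred_eq_of_pos hk1).symm⟩
  letI := σ
  -- notation
  set WRA : Set V := ⋃ a ∈ A, {w | Dd G σ r a w ≠ none} with hWRAdef
  have hsupp_sub : ∀ u : V, {w | Dd G σ r u w ≠ none} ⊆ WReach G σ (2 * r) u := by
    intro u w hw
    rw [Set.mem_setOf_eq, Dd_ne_none_iff] at hw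
    obtain ⟨n, hn, hrel⟩ := hw
    exact nrel_mem_wreach (le_trans hn (by omega)) hrel
  have hWRA : WRA.ncard ≤ A.ncard * k :=
    ncard_biUnion_le' A (Set.toFinite A) _ k
      (fun a => le_trans (Set.ncard_le_ncard (hsupp_sub a) (Set.toFinite _)) (hσ a))
      (fun a => Set.toFinite _)
  -- decoding function
  set dec : V × (V → Option (Fin (r + 1))) → Set V := fun p =>
    {u ∈ A | ∃ w, ∃ a b : Fin (r + 1), p.2 w = some a ∧ Dd G σ r u w = some b ∧
      (a : ℕ) + (b : ℕ) ≤ r} with hdecdef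
  set Good : Set (V × (V → Option (Fin (r + 1)))) :=
    {p | p.1 ∈ WRA ∧ p.2 p.1 ≠ none ∧ ∀ x, p.2 x ≠ none → x ∈ WReach G σ (2 * r) p.1}
    with hGooddef
  -- main covering
  have hcover : {S : Set V | ∃ v : V, S = {w ∈ A | ∃ p : G.Walk v w, p.length ≤ r}}
      ⊆ insert ∅ (dec '' Good) := by
    rintro S ⟨v, rfl⟩
    rw [trace_eq G σ r A v]
    set Ev : V → Option (Fin (r + 1)) := fun w => if w ∈ WRA then Dd G σ r v w else none
      with hEdef
    have hEv : ∀ w, w ∈ WRA → Ev w = Dd G σ r v w := fun w hw => if_pos hw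
    have hEnone : ∀ w, Ev w ≠ none → w ∈ WRA ∧ Dd G σ r v w ≠ none := by
      intro w hw
      by_cases h : w ∈ WRA
      · exact ⟨h, by rwa [hEv w h] at hw⟩
      · exact absurd (if_neg h) hw
    -- trace is decoded from Ev
    have htr : {u ∈ A | ∃ w, ∃ a b : Fin (r + 1), Dd G σ r v w = some a ∧
        Dd G σ r u w = some b ∧ (a : ℕ) + (b : ℕ) ≤ r} = dec (v, Ev) := by
      rw [hdecdef]
      ext u
      simp only [Set.mem_setOf_eq]
      constructor
      · rintro ⟨hu, w, a, b, ha, hb, hab⟩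
        have hwWRA : w ∈ WRA := Set.mem_biUnion hu (by simp [hb])
        exact ⟨hu, w, a, b, by rw [hEv w hwWRA]; exact ha, hb, hab⟩
      · rintro ⟨hu, w, a, b, ha, hb, hab⟩
        obtain ⟨hwWRA, -⟩ := hEnone w (by simp [ha])
        rw [hEv w hwWRA] at ha
        exact ⟨hu, w, a, b, ha, hb, hab⟩
    by_cases hS : {u ∈ A | ∃ w, ∃ a b : Fin (r + 1), Dd G σ r v w = some a ∧
        Dd G σ r u w = some b ∧ (a : ℕ) + (b : ℕ) ≤ r} = ∅
    · rw [hS]; exact Set.mem_insert _ _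
    -- nonempty: get maximal witness
    obtain ⟨u, hu, w₁, a₁, b₁, ha₁, hb₁, -⟩ := Set.nonempty_iff_ne_empty.2 hS
    have hM : (Set.toFinite {w | Ev w ≠ none}).toFinset.Nonempty := by
      rw [Set.Finite.toFinset_nonempty]
      refine ⟨w₁, ?_⟩
      have hwWRA : w₁ ∈ WRA := Set.mem_biUnion hu (by simp [hb₁])
      rw [Set.mem_setOf_eq, hEv w₁ hwWRA, ha₁]
      simp
    obtain ⟨ws, hws, hwsmax⟩ := Finset.exists_max_image _ id hM
    rw [Set.Finite.mem_toFinset, Set.mem_setOf_eq] at hws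
    have hwsmax' : ∀ x, Ev x ≠ none → x ≤ ws := by
      intro x hx
      exact hwsmax x (by rwa [Set.Finite.mem_toFinset, Set.mem_setOf_eq])
    refine Set.mem_insert_iff.2 (Or.inr ⟨(ws, Ev), ?_, htr.symm⟩)
    obtain ⟨hwsWRA, hDvws⟩ := hEnone ws hws
    refine ⟨hwsWRA, hws, ?_⟩
    intro x hx
    obtain ⟨hxWRA, hDvx⟩ := hEnone x hx
    rw [Dd_ne_none_iff] at hDvws hDvx
    obtain ⟨m, hm, pm, hpm, hpmsupp⟩ := hDvws
    obtain ⟨n, hn, pn, hpn, hpnsupp⟩ := hDvx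
    have hxws : x ≤ ws := hwsmax' x hx
    have : NRel G σ (m + n) ws x := by
      refine ⟨pm.reverse.append pn, ?_, ?_⟩
      · rw [SimpleGraph.Walk.length_append, SimpleGraph.Walk.length_reverse]
        exact Nat.add_le_add hpm hpn
      · intro y hy
        rw [SimpleGraph.Walk.mem_support_append_iff] at hy
        rcases hy with hy | hy
        · rw [SimpleGraph.Walk.support_reverse, List.mem_reverse] at hy
          exact le_trans hxws (hpmsupp y hy)
        · exact hpnsupp y hy
    exact nrel_mem_wreach (by omega) this
  -- counting Good
  have he : ∀ w : V, ∃ f : ↥(WReach G σ (2 * r) w \ {w}) → Fin k', Function.Injective f := by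
    intro w
    have h1 : (WReach G σ (2 * r) w \ {w}).ncard + 1 = (WReach G σ (2 * r) w).ncard :=
      Set.ncard_diff_singleton_add_one (self_mem_wreach G σ (2 * r) w) (Set.toFinite _)
    have h2 := hσ w
    rw [hkk] at h2
    have h3 : (WReach G σ (2 * r) w \ {w}).ncard ≤ k' := by omega
    have h4 : Fintype.card ↥(WReach G σ (2 * r) w \ {w}) ≤ Fintype.card (Fin k') := by
      rw [Fintype.card_fin, ← Nat.card_eq_fintype_card, Nat.card_coe_set_eq]
      exact h3
    obtain ⟨f⟩ := Function.Embedding.nonempty_of_card_le h4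
    exact ⟨f, f.injective⟩
  choose e he using he
  set Φ : ↥Good → ↥WRA × Fin (r + 1) × (Fin k' → Option (Fin (r + 1))) := fun p =>
    ⟨⟨p.1.1, p.2.1⟩, (p.1.2 p.1.1).getD ⟨0, Nat.succ_pos r⟩,
      fun i => if h : ∃ x : ↥(WReach G σ (2 * r) p.1.1 \ {p.1.1}), e p.1.1 x = i
        then p.1.2 (Classical.choose h).1 else none⟩ with hΦdef
  have hΦinj : Function.Injective Φ := by
    rintro ⟨⟨w1, f1⟩, hw1, hf1, hsupp1⟩ ⟨⟨w2, f2⟩, hw2, hf2, hsupp2⟩ hpq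
    simp only [hΦdef, Prod.mk.injEq, Subtype.mk.injEq] at hpq
    obtain ⟨hw, hval, hfun⟩ := hpq
    subst hw
    refine Subtype.ext (Prod.ext rfl ?_)
    simp only at *
    funext x
    by_cases hx1 : x = w1
    · subst hx1
      obtain ⟨a1, ha1⟩ := Option.ne_none_iff_exists'.1 hf1
      obtain ⟨a2, ha2⟩ := Option.ne_none_iff_exists'.1 hf2
      simp only at ha1 ha2
      rw [ha1, ha2]
      rw [ha1, ha2] at hval
      simpa using hval
    by_cases hx2 : x ∈ WReach G σ (2 * r) w1 \ {w1}
    · have h := congrFun hfun (e w1 ⟨x, hx2⟩)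
      have hex : ∃ y : ↥(WReach G σ (2 * r) w1 \ {w1}), e w1 y = e w1 ⟨x, hx2⟩ :=
        ⟨⟨x, hx2⟩, rfl⟩
      rw [dif_pos hex, dif_pos hex] at h
      have hch : Classical.choose hex = ⟨x, hx2⟩ := he w1 (Classical.choose_spec hex)
      rwa [hch] at h
    · have hnx : x ∉ WReach G σ (2 * r) w1 := fun h => hx2 ⟨h, hx1⟩
      have e1 : f1 x = none := by
        by_contra h
        exact hnx (hsupp1 x h)
      have e2 : f2 x = none := by
        by_contra h
        exact hnx (hsupp2 x h)
      rw [e1, e2]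
  have hGoodcount : Good.ncard ≤ WRA.ncard * ((r + 1) * (r + 2) ^ k') := by
    have := Nat.card_le_card_of_injective Φ hΦinj
    rw [Nat.card_coe_set_eq] at this
    refine le_trans this (le_of_eq ?_)
    rw [Nat.card_prod, Nat.card_prod, Nat.card_coe_set_eq]
    congr 1
    rw [Nat.card_eq_fintype_card, Nat.card_eq_fintype_card, Fintype.card_fin]
    congr 1
    rw [Fintype.card_fun, Fintype.card_option, Fintype.card_fin, Fintype.card_fin]
  -- put it together over ℕ
  have hnat : {S : Set V | ∃ v : V, S = {w ∈ A | ∃ p : G.Walk v w, p.length ≤ r}}.ncard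
      ≤ A.ncard * k * ((r + 1) * (2 * r + 2) ^ k') + 1 := by
    calc {S : Set V | ∃ v : V, S = {w ∈ A | ∃ p : G.Walk v w, p.length ≤ r}}.ncard
        ≤ (insert ∅ (dec '' Good)).ncard := Set.ncard_le_ncard hcover (Set.toFinite _)
      _ ≤ (dec '' Good).ncard + 1 := Set.ncard_insert_le _ _
      _ ≤ Good.ncard + 1 := Nat.add_le_add_right (Set.ncard_image_le (Set.toFinite _)) 1
      _ ≤ WRA.ncard * ((r + 1) * (r + 2) ^ k') + 1 := Nat.add_le_add_right hGoodcount 1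
      _ ≤ A.ncard * k * ((r + 1) * (r + 2) ^ k') + 1 := by
          exact Nat.add_le_add_right (Nat.mul_le_mul_right _ hWRA) 1
      _ ≤ A.ncard * k * ((r + 1) * (2 * r + 2) ^ k') + 1 := by
          refine Nat.add_le_add_right (Nat.mul_le_mul_left _ ?_) 1
          exact Nat.mul_le_mul_left _ (Nat.pow_le_pow_left (by omega) _)
  -- conclude over ℝ
  have hcast : ((A.ncard * k * ((r + 1) * (2 * r + 2) ^ k') + 1 : ℕ) : ℝ)
      = (1 / 2 : ℝ) * ((2 * r + 2 : ℝ) ^ k) * (k : ℝ) * (A.ncard : ℝ) + 1 := by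
    rw [hkk]
    push_cast
    rw [pow_succ]
    ring
  calc ({S : Set V | ∃ v : V, S = {w ∈ A | ∃ p : G.Walk v w, p.length ≤ r}}.ncard : ℝ)
      ≤ ((A.ncard * k * ((r + 1) * (2 * r + 2) ^ k') + 1 : ℕ) : ℝ) := by exact_mod_cast hnat
    _ = _ := hcast
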